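/- Let Ω ⊂ ℂ be a domain and J ⊂ ∂Ω a relatively open subset of the boundary. Suppose that the complement of the closure of Ω in the Riemann sphere ℂ ∪ {∞} is connected, and that ∂Ω ∖ J is contained in the closure of the complement of the closure of Ω. Then for every m ∈ ℕ, the set Δ_m = {z ∈ Ω ∪ J : dist(z, ∂Ω ∖ J) ≥ 1/m} has connected complement in the Riemann sphere. -/

import Mathlib

open Metric Set

open OnePoint in
theorem stmt_0 (Ω J : Set ℂ) (hΩopen : IsOpen Ω) (hΩconn : IsConnected Ω)
    (hJsub : J ⊆ frontier Ω)
    (hJrelopen : ∃ U : Set ℂ, IsOpen U ∧ J = frontier Ω ∩ U)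
    (hcompl : IsConnected ((((↑·) : ℂ → OnePoint ℂ) '' closure Ω)ᶜ))
    (hJc : frontier Ω \ J ⊆ closure (closure Ω)ᶜ)
    (m : ℕ) (hm : 1 ≤ m) :
    IsConnected ((((↑·) : ℂ → OnePoint ℂ) ''
      {z ∈ Ω ∪ J | Metric.infDist z (frontier Ω \ J) ≥ 1 / (m : ℝ)})ᶜ) := by
  have hm' : (0:ℝ) < 1 / m := by
    have : (0:ℝ) < m := by exact_mod_cast hm
    positivity
  set S : Set ℂ := frontier Ω \ J with hSdef
  set K : Set ℂ := {z ∈ Ω ∪ J | Metric.infDist z S ≥ 1 / (m:ℝ)} with hKdef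
  by_cases hS : S.Nonempty
  · -- main case
    set A : Set (OnePoint ℂ) := (((↑·) : ℂ → OnePoint ℂ) '' closure Ω)ᶜ with hAdef
    have hKclos : K ⊆ closure Ω := by
      rintro z ⟨hz, -⟩
      rcases hz with hz | hz
      · exact subset_closure hz
      · exact frontier_subset_closure (hJsub hz)
    have hAsub : A ⊆ (((↑·) : ℂ → OnePoint ℂ) '' K)ᶜ :=
      compl_subset_compl.mpr (image_mono (f := ((↑·) : ℂ → OnePoint ℂ)) hKclos)
    have hinfty : (∞ : OnePoint ℂ) ∈ (((↑·) : ℂ → OnePoint ℂ) '' K)ᶜ := by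
      rintro ⟨z, -, hz⟩
      exact OnePoint.coe_ne_infty z hz
    have hinftyA : (∞ : OnePoint ℂ) ∈ A := by
      rintro ⟨z, -, hz⟩
      exact OnePoint.coe_ne_infty z hz
    have hcoemem : ∀ u : ℂ, u ∉ K → (u : OnePoint ℂ) ∈ (((↑·) : ℂ → OnePoint ℂ) '' K)ᶜ := by
      intro u hu ⟨v, hv, hvu⟩
      rw [OnePoint.coe_eq_coe] at hvu
      exact hu (hvu ▸ hv)
    refine ⟨⟨∞, hinfty⟩, isPreconnected_of_forall ∞ ?_⟩
    intro y hy
    induction y using OnePoint.rec with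
    | infty => exact ⟨A, hAsub, hinftyA, hinftyA, hcompl.isPreconnected⟩
    | coe z =>
      have hzK : z ∉ K := fun h => hy (mem_image_of_mem _ h)
      by_cases hzΩ : z ∈ closure Ω
      · -- z ∈ closure Ω, not in K: close to S
        have hlt : Metric.infDist z S < 1 / m := by
          by_contra h
          push_neg at h
          have hzUJ : z ∉ Ω ∪ J := fun hmem => hzK ⟨hmem, h⟩
          have hzS : z ∈ S := by
            constructor
            · rw [frontier, hΩopen.interior_eq]
              exact ⟨hzΩ, fun hmem => hzUJ (Or.inl hmem)⟩
            · exact fun hmem => hzUJ (Or.inr hmem)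
          rw [Metric.infDist_zero_of_mem hzS] at h
          exact absurd hm' (not_lt.mpr h)
        obtain ⟨w, hwS, hw⟩ := (Metric.infDist_lt_iff hS).mp hlt
        obtain ⟨p, hp, hpd⟩ : ∃ p ∈ (closure Ω)ᶜ, dist w p < 1 / m := by
          have := hJc hwS
          rw [Metric.mem_closure_iff] at this
          exact this _ hm'
        set seg : Set ℂ := segment ℝ z w ∪ segment ℝ w p with hsegdef
        have hseg1 : ∀ u ∈ segment ℝ z w, dist u w ≤ dist z w :=
          fun u hu => (convex_closedBall w (dist z w)).segment_subset
            (mem_closedBall.mpr le_rfl) (mem_closedBall_self dist_nonneg) hu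
        have hseg2 : ∀ u ∈ segment ℝ w p, dist u w ≤ dist w p :=
          fun u hu => (convex_closedBall w (dist w p)).segment_subset
            (mem_closedBall_self dist_nonneg)
            (mem_closedBall.mpr (dist_comm p w ▸ le_rfl)) hu
        have hsegK : ∀ u ∈ seg, u ∉ K := by
          intro u hu huK
          have hle : Metric.infDist u S ≤ dist u w := Metric.infDist_le_dist_of_mem hwS
          have hlt' : dist u w < 1 / m := by
            rcases hu with hu | hu
            · exact lt_of_le_of_lt (hseg1 u hu) hw
            · exact lt_of_le_of_lt (hseg2 u hu) hpd
          exact absurd (lt_of_le_of_lt hle hlt') (not_lt.mpr huK.2)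
        refine ⟨A ∪ (((↑·) : ℂ → OnePoint ℂ) '' seg), ?_, Or.inl hinftyA, ?_, ?_⟩
        · rintro x (hx | ⟨u, hu, rfl⟩)
          · exact hAsub hx
          · exact hcoemem u (hsegK u hu)
        · exact Or.inr ⟨z, Or.inl (left_mem_segment ℝ z w), rfl⟩
        · have hsegconn : IsPreconnected seg :=
            IsPreconnected.union w (right_mem_segment ℝ z w) (left_mem_segment ℝ w p)
              (convex_segment z w).isPreconnected (convex_segment w p).isPreconnected
          have himg : IsPreconnected ((((↑·) : ℂ → OnePoint ℂ)) '' seg) :=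
            hsegconn.image _ OnePoint.continuous_coe.continuousOn
          have hpA : (p : OnePoint ℂ) ∈ A := by
            rintro ⟨v, hv, hvp⟩
            rw [OnePoint.coe_eq_coe] at hvp
            exact hp (hvp ▸ hv)
          exact IsPreconnected.union (p : OnePoint ℂ) hpA
            ⟨p, Or.inr (right_mem_segment ℝ w p), rfl⟩ hcompl.isPreconnected himg
      · -- z ∉ closure Ω
        have hzA : (z : OnePoint ℂ) ∈ A := by
          rintro ⟨v, hv, hvz⟩
          rw [OnePoint.coe_eq_coe] at hvz
          exact hzΩ (hvz ▸ hv)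
        exact ⟨A, hAsub, hinftyA, hzA, hcompl.isPreconnected⟩
  · -- S = ∅, so K = ∅ and the complement is univ
    have hSempty : S = ∅ := not_nonempty_iff_eq_empty.mp hS
    have hKempty : K = ∅ := by
      ext z
      simp only [hKdef, mem_setOf_eq, mem_empty_iff_false, iff_false, not_and]
      intro _
      rw [hSempty, Metric.infDist_empty]
      exact fun h => absurd hm' (not_lt.mpr h)
    rw [hKempty, image_empty, compl_empty]
    refine ⟨⟨∞, mem_univ _⟩, ?_⟩
    have h1 : IsPreconnected (range ((↑·) : ℂ → OnePoint ℂ)) := by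
      rw [← image_univ]
      exact isPreconnected_univ.image _ OnePoint.continuous_coe.continuousOn
    have h2 := h1.closure
    rwa [OnePoint.denseRange_coe.closure_range] at h2
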